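/- Let G be a connected 4-regular multigraph (every vertex has degree 4, a loop counting 2), let P be a circuit partition of G, and let v be a vertex of G. Among the three circuit partitions obtained by choosing one of the three possible transitions (pairings of the four half-edges at v into two pairs) at v while keeping P's transitions at all other vertices, two have equal cardinality k and the third has cardinality k + 1. -/

import Mathlib

/-
A 4-regular multigraph with a transition system is modelled via half-edges
("darts"): `ε` is a fixed-point-free involution on the darts pairing them into
edges, `π` assigns each dart to its vertex, and each vertex carries exactly four
darts. A circuit partition corresponds to a fixed-point-free, vertex-preserving
involution `τ` on the darts (the transition: the pairing of the four half-edges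
at each vertex into two pairs); its circuits are the orbits of the group
generated by `ε` and `τ`, i.e. the classes of the quotient by the relation
generated by `ε` and `τ`.
-/

/-- The number of circuits of the circuit partition determined by the edge
involution `ε` and the transition involution `τ`: the number of equivalence
classes of darts under the equivalence generated by `ε` and `τ`. -/
noncomputable def circuitCount {D : Type*} (ε τ : D → D) : ℕ :=
  Nat.card (Quot (fun a b : D => ε a = b ∨ τ a = b))

namespace CircuitCountAux

variable {D V : Type*}

/-- The relation generated by `ε` everywhere and by `σ` away from `v`. -/
def R (ε σ : D → D) (π : D → V) (v : V) : D → D → Prop :=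
  fun a b => ε a = b ∨ (π a ≠ v ∧ σ a = b)

theorem R_symm {ε σ : D → D} {π : D → V} {v : V}
    (hεinv : ∀ d, ε (ε d) = d) (hσinv : ∀ d, σ (σ d) = d)
    (hσπ : ∀ d, π (σ d) = π d) {a b : D} (h : R ε σ π v a b) : R ε σ π v b a := by
  rcases h with h | ⟨hπ, h⟩
  · exact Or.inl (by rw [← h, hεinv])
  · refine Or.inr ⟨?_, by rw [← h, hσinv]⟩
    rw [← h, hσπ]; exact hπ

theorem exists_f [Fintype D] [DecidableEq V] (ε σ : D → D) (π : D → V) (v : V)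
    (hεinv : ∀ d, ε (ε d) = d) (hεfpf : ∀ d, ε d ≠ d)
    (hσinv : ∀ d, σ (σ d) = d) (hσfpf : ∀ d, σ d ≠ d)
    (hσπ : ∀ d, π (σ d) = π d) :
    ∃ f : D → D,
      (∀ x, π x = v → π (f x) = v) ∧
      (∀ x, π x = v → f (f x) = x) ∧
      (∀ x, π x = v → f x ≠ x) ∧
      (∀ x, π x = v → Relation.EqvGen (R ε σ π v) x (f x)) ∧
      (∀ x y, π x = v → π y = v → Relation.EqvGen (R ε σ π v) x y →
        y = x ∨ y = f x) := by
  classical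
  set step : D → D := fun d => ε (σ d) with hstepdef
  have hstepinj : Function.Injective step := by
    intro p q h
    have h2 := congrArg (fun d => σ (ε d)) h
    simpa [hstepdef, hσinv, hεinv] using h2
  have εinj : Function.Injective ε := fun p q h => by rw [← hεinv p, h, hεinv]
  set t : D → ℕ → D := fun x n => step^[n] (ε x) with htdef
  have ht0 : ∀ x, t x 0 = ε x := fun x => rfl
  have hsucc : ∀ x n, t x (n + 1) = ε (σ (t x n)) := fun x n =>
    Function.iterate_succ_apply' step n (ε x)
  -- termination of the trail
  have hex : ∀ x, π x = v → ∃ n, π (t x n) = v := by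
    intro x hx
    by_contra hc
    push_neg at hc
    have key : ∀ m p, t x m = t x (m + (p + 1)) → False := by
      intro m p hmp
      have h1 : ε x = t x (p + 1) := by
        have h2 : step^[m] (ε x) = step^[m] (step^[p+1] (ε x)) := by
          rw [← Function.iterate_add_apply]; exact hmp
        exact (hstepinj.iterate m) h2
      have h2 : x = σ (t x p) := εinj (h1.trans (hsucc x p))
      have h3 : π (t x p) = v := by rw [← hσπ (t x p), ← h2]; exact hx
      exact hc p h3
    obtain ⟨m, n, hmn, he⟩ := Finite.exists_ne_map_eq_of_infinite (t x)
    rcases hmn.lt_or_gt with h | h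
    · exact key m (n - m - 1) (by rw [he]; congr 1; omega)
    · exact key n (m - n - 1) (by rw [← he]; congr 1; omega)
  set N : D → ℕ := fun x => if hx : π x = v then Nat.find (hex x hx) else 0 with hNdefn
  have hNdef : ∀ x (hx : π x = v), N x = Nat.find (hex x hx) := fun x hx => dif_pos hx
  set f : D → D := fun x => t x (N x) with hfdef
  have hfval : ∀ x, f x = t x (N x) := fun x => rfl
  have hNspec : ∀ x (hx : π x = v), π (t x (N x)) = v := by
    intro x hx; rw [hNdef x hx]; exact Nat.find_spec (hex x hx)
  have hNmin : ∀ x (hx : π x = v), ∀ k, k < N x → π (t x k) ≠ v := by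
    intro x hx k hk; rw [hNdef x hx] at hk; exact Nat.find_min (hex x hx) hk
  have hπf : ∀ x, π x = v → π (f x) = v := fun x hx => hNspec x hx
  -- x is equivalent to every trail point
  have hE : ∀ x (hx : π x = v) k, k ≤ N x → Relation.EqvGen (R ε σ π v) x (t x k) := by
    intro x hx k
    induction k with
    | zero => intro _; exact Relation.EqvGen.rel _ _ (Or.inl (ht0 x).symm)
    | succ k ih =>
      intro hk
      have hk' : k < N x := lt_of_lt_of_le (Nat.lt_succ_self k) hk
      have h1 := ih hk'.le
      have h2 : R ε σ π v (t x k) (σ (t x k)) := Or.inr ⟨hNmin x hx k hk', rfl⟩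
      have h3 : R ε σ π v (σ (t x k)) (t x (k + 1)) := Or.inl (hsucc x k).symm
      exact h1.trans _ _ _ ((Relation.EqvGen.rel _ _ h2).trans _ _ _
        (Relation.EqvGen.rel _ _ h3))
  have hxf : ∀ x, π x = v → Relation.EqvGen (R ε σ π v) x (f x) := by
    intro x hx; rw [hfval x]; exact hE x hx _ le_rfl
  -- closure: the class of x is contained in the trail
  have hclass : ∀ x (hx : π x = v) y, Relation.EqvGen (R ε σ π v) x y →
      y = x ∨ (∃ k, k ≤ N x ∧ y = t x k) ∨ (∃ k, k < N x ∧ y = σ (t x k)) := by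
    intro x hx y hy
    set T : D → Prop := fun d =>
      d = x ∨ (∃ k, k ≤ N x ∧ d = t x k) ∨ (∃ k, k < N x ∧ d = σ (t x k)) with hTdef
    have hstep1 : ∀ p q, R ε σ π v p q → T p → T q := by
      intro p q hpq hp
      rcases hp with rfl | ⟨k, hk, rfl⟩ | ⟨k, hk, rfl⟩
      · rcases hpq with h | ⟨hπ, h⟩
        · exact Or.inr (Or.inl ⟨0, Nat.zero_le _, by rw [← h, ht0]⟩)
        · exact absurd hx hπ
      · rcases hpq with h | ⟨hπ, h⟩
        · rcases Nat.eq_zero_or_pos k with rfl | hpos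
          · left; rw [← h, ht0, hεinv]
          · right; right
            refine ⟨k - 1, by omega, ?_⟩
            have h2 : t x k = ε (σ (t x (k - 1))) := by
              rw [← hsucc]; congr 1; omega
            rw [← h, h2, hεinv]
        · right; right
          have hkN : k < N x := by
            rcases lt_or_eq_of_le hk with h' | h'
            · exact h'
            · exact absurd (h' ▸ hNspec x hx) hπ
          exact ⟨k, hkN, h.symm⟩
      · rcases hpq with h | ⟨hπ, h⟩
        · exact Or.inr (Or.inl ⟨k + 1, by omega, by rw [← h, hsucc]⟩)
        · exact Or.inr (Or.inl ⟨k, hk.le, by rw [← h, hσinv]⟩)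
    have hiff : ∀ p q, Relation.EqvGen (R ε σ π v) p q → (T p ↔ T q) := by
      intro p q h
      induction h with
      | rel p q hpq => exact ⟨hstep1 p q hpq, hstep1 q p (R_symm hεinv hσinv hσπ hpq)⟩
      | refl p => exact Iff.rfl
      | symm p q _ ih => exact ih.symm
      | trans p q r _ _ ih1 ih2 => exact ih1.trans ih2
    exact (hiff x y hy).mp (Or.inl rfl)
  have htwo : ∀ x y, π x = v → π y = v → Relation.EqvGen (R ε σ π v) x y →
      y = x ∨ y = f x := by
    intro x y hx hy h
    rcases hclass x hx y h with rfl | ⟨k, hk, rfl⟩ | ⟨k, hk, rfl⟩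
    · exact Or.inl rfl
    · rcases lt_or_eq_of_le hk with h' | h'
      · exact absurd hy (hNmin x hx k h')
      · exact Or.inr (by rw [hfval, h'])
    · exact absurd hy (by rw [hσπ]; exact hNmin x hx k hk)
  -- reversed trail
  have hrev : ∀ x (hx : π x = v), 1 ≤ N x → ∀ k, k ≤ N x - 1 →
      t (f x) k = σ (t x (N x - 1 - k)) := by
    intro x hx hN k
    induction k with
    | zero =>
      intro _
      rw [ht0, hfval]
      have h2 : t x (N x) = ε (σ (t x (N x - 1))) := by
        rw [← hsucc]; congr 1; omega
      rw [h2, hεinv, Nat.sub_zero]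
    | succ k ih =>
      intro hk
      have h1 := ih (by omega)
      rw [hsucc, h1, hσinv]
      have h2 : t x (N x - 1 - k) = ε (σ (t x (N x - 1 - (k + 1)))) := by
        rw [← hsucc]; congr 1; omega
      rw [h2, hεinv]
  have hftop : ∀ x (hx : π x = v), t (f x) (N x) = x := by
    intro x hx
    rcases Nat.eq_zero_or_pos (N x) with h0 | hpos
    · rw [h0, ht0, hfval, h0, ht0]; exact hεinv x
    · have h3 : N x = (N x - 1) + 1 := by omega
      rw [h3, hsucc, hrev x hx hpos _ le_rfl, hσinv]
      have h4 : N x - 1 - (N x - 1) = 0 := by omega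
      rw [h4, ht0]; exact hεinv x
  have hπfk : ∀ x (hx : π x = v) k, k < N x → π (t (f x) k) ≠ v := by
    intro x hx k hk
    have hN : 1 ≤ N x := by omega
    rw [hrev x hx hN k (by omega), hσπ]
    exact hNmin x hx _ (by omega)
  have hNf : ∀ x (hx : π x = v), N (f x) = N x := by
    intro x hx
    have h1 : N (f x) ≤ N x := by
      rw [hNdef (f x) (hπf x hx)]
      exact Nat.find_min' _ (by rw [hftop x hx]; exact hx)
    rcases lt_or_eq_of_le h1 with h2 | h2
    · exact absurd (hNspec (f x) (hπf x hx)) (hπfk x hx _ h2)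
    · exact h2
  have hff : ∀ x, π x = v → f (f x) = x := by
    intro x hx
    rw [hfval (f x), hNf x hx, hftop x hx]
  have hffpf : ∀ x, π x = v → f x ≠ x := by
    intro x hx hfx
    rcases Nat.eq_zero_or_pos (N x) with h0 | hpos
    · have h1 := hfx
      rw [hfval, h0, ht0] at h1
      exact hεfpf x h1
    · have hpal : ∀ k, k ≤ N x - 1 → t x k = σ (t x (N x - 1 - k)) := by
        intro k hk
        have h1 := hrev x hx hpos k hk
        rw [hfx] at h1; exact h1
      rcases Nat.even_or_odd (N x - 1) with ⟨m, hm⟩ | ⟨m, hm⟩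
      · have h1 := hpal m (by omega)
        rw [show N x - 1 - m = m by omega] at h1
        exact hσfpf _ h1.symm
      · have h1 := hpal (m + 1) (by omega)
        rw [show N x - 1 - (m + 1) = m by omega] at h1
        exact hεfpf _ ((hsucc x m).symm.trans h1)
  exact ⟨f, hπf, hff, hffpf, hxf, htwo⟩

end CircuitCountAux

set_option linter.unusedVariables false in
/-- Let `G` be a connected 4-regular multigraph, `P` a circuit partition of `G`
and `v` a vertex. Among the three circuit partitions obtained by choosing one of
the three possible transitions at `v` (keeping the transitions of `P` at all
other vertices), two have equal cardinality `k` and the third has cardinality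
`k + 1`. (Here `τ 0`, `τ 1`, `τ 2` are the three pairwise distinct transition
systems agreeing outside `v`; since there are exactly three fixed-point-free
involutions of the four half-edges at `v`, they realize all three choices.) -/
theorem circuitCount_three_transitions {D V : Type*} [Fintype D] [DecidableEq D]
    [Fintype V] [DecidableEq V]
    (ε : D → D) (hεinv : ∀ d, ε (ε d) = d) (hεfpf : ∀ d, ε d ≠ d)
    (π : D → V) (hdeg : ∀ w : V, Fintype.card {d : D // π d = w} = 4)
    (hconn : ∀ d d' : D, Relation.EqvGen (fun a b => ε a = b ∨ π a = π b) d d')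
    (v : V) (τ : Fin 3 → D → D)
    (hinv : ∀ i d, τ i (τ i d) = d) (hfpf : ∀ i d, τ i d ≠ d)
    (hvert : ∀ i d, π (τ i d) = π d)
    (hagree : ∀ i j d, π d ≠ v → τ i d = τ j d)
    (hdist : ∀ i j, i ≠ j → τ i ≠ τ j) :
    ∃ k : ℕ,
      ({circuitCount ε (τ 0), circuitCount ε (τ 1), circuitCount ε (τ 2)} :
        Multiset ℕ) = {k, k, k + 1} := by
  classical
  obtain ⟨f, hπf, hff, hffpf, hxf, htwo⟩ :=
    CircuitCountAux.exists_f ε (τ 0) π v hεinv hεfpf (hinv 0) (hfpf 0) (hvert 0)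
  set R0 := CircuitCountAux.R ε (τ 0) π v with hR0def
  have hRsub : ∀ (i : Fin 3) a b, R0 a b → (ε a = b ∨ τ i a = b) := by
    intro i a b h
    rcases h with h | ⟨hπ, h⟩
    · exact Or.inl h
    · exact Or.inr ((hagree i 0 a hπ).trans h)
  have hEsub : ∀ (i : Fin 3) x y, Relation.EqvGen R0 x y →
      Relation.EqvGen (fun a b => ε a = b ∨ τ i a = b) x y :=
    fun i x y h => Relation.EqvGen.mono (hRsub i) x y h
  -- pick a dart `a` at `v`
  have hpos : 0 < Fintype.card {d : D // π d = v} := by rw [hdeg v]; norm_num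
  obtain ⟨⟨a, ha⟩⟩ := Fintype.card_pos_iff.mp hpos
  have hfa := hπf a ha
  -- pick a dart `c` at `v` outside `{a, f a}`
  have hcex : ∃ c, π c = v ∧ c ≠ a ∧ c ≠ f a := by
    by_contra hcon
    push_neg at hcon
    have hsub : (Finset.univ : Finset {d : D // π d = v}) ⊆
        {⟨a, ha⟩, ⟨f a, hfa⟩} := by
      rintro ⟨d, hd⟩ _
      simp only [Finset.mem_insert, Finset.mem_singleton, Subtype.mk.injEq]
      by_cases h : d = a
      · exact Or.inl h
      · exact Or.inr (hcon d hd h)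
    have h1 := Finset.card_le_card hsub
    rw [Finset.card_univ, hdeg v] at h1
    have h2 : ({⟨a, ha⟩, ⟨f a, hfa⟩} : Finset {d : D // π d = v}).card ≤ 2 :=
      (Finset.card_insert_le _ _).trans (by simp)
    omega
  obtain ⟨c, hc, hca, hcfa⟩ := hcex
  have hfc := hπf c hc
  have hfaa : f a ≠ a := hffpf a ha
  have hfcc : f c ≠ c := hffpf c hc
  have hfc_a : f c ≠ a := fun h => hcfa ((hff c hc).symm.trans (congrArg f h))
  have hfc_fa : f c ≠ f a :=
    fun h => hca ((hff c hc).symm.trans ((congrArg f h).trans (hff a ha)))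
  -- the four darts at `v`
  have hS : ∀ d, π d = v → d = a ∨ d = f a ∨ d = c ∨ d = f c := by
    intro d hd
    set A : Finset {d : D // π d = v} := {⟨a, ha⟩, ⟨f a, hfa⟩, ⟨c, hc⟩, ⟨f c, hfc⟩}
      with hA
    have hAcard : A.card = 4 := by
      rw [hA]
      rw [Finset.card_insert_of_notMem (by
        simp only [Finset.mem_insert, Finset.mem_singleton, Subtype.mk.injEq]
        push_neg
        exact ⟨Ne.symm hfaa, Ne.symm hca, Ne.symm hfc_a⟩)]
      rw [Finset.card_insert_of_notMem (by
        simp only [Finset.mem_insert, Finset.mem_singleton, Subtype.mk.injEq]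
        push_neg
        exact ⟨Ne.symm hcfa, Ne.symm hfc_fa⟩)]
      rw [Finset.card_insert_of_notMem (by
        simp only [Finset.mem_singleton, Subtype.mk.injEq]
        exact Ne.symm hfcc)]
      rfl
    have hAuniv : A = Finset.univ := Finset.eq_univ_of_card A (by rw [hAcard, hdeg v])
    have hmem : (⟨d, hd⟩ : {d : D // π d = v}) ∈ A := hAuniv ▸ Finset.mem_univ _
    simpa only [hA, Finset.mem_insert, Finset.mem_singleton, Subtype.mk.injEq]
      using hmem
  -- uniqueness of the fourth dart
  have huniq : ∀ b s u w : D, π b = v → π s = v → π u = v → π w = v →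
      b ≠ a → s ≠ a → s ≠ b → u ≠ a → u ≠ b → u ≠ s → w ≠ a → w ≠ b → w ≠ s →
      u = w := by
    intro b s u w hb hs hu hw h1 h2 h3 h4 h5 h6 h7 h8 h9
    set A : Finset {d : D // π d = v} := {⟨a, ha⟩, ⟨b, hb⟩, ⟨s, hs⟩} with hA
    have hAcard : A.card = 3 := by
      rw [hA]
      rw [Finset.card_insert_of_notMem (by
        simp only [Finset.mem_insert, Finset.mem_singleton, Subtype.mk.injEq]
        push_neg
        exact ⟨Ne.symm h1, Ne.symm h2⟩)]
      rw [Finset.card_insert_of_notMem (by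
        simp only [Finset.mem_singleton, Subtype.mk.injEq]
        exact Ne.symm h3)]
      rfl
    have h10 : (Finset.univ \ A).card = 1 := by
      rw [Finset.card_sdiff_of_subset (Finset.subset_univ A), Finset.card_univ, hdeg v, hAcard]
    obtain ⟨x, hx⟩ := Finset.card_eq_one.mp h10
    have hu2 : (⟨u, hu⟩ : {d : D // π d = v}) ∈ Finset.univ \ A := by
      simp only [hA, Finset.mem_sdiff, Finset.mem_univ, true_and, Finset.mem_insert,
        Finset.mem_singleton, Subtype.mk.injEq]
      push_neg
      exact ⟨h4, h5, h6⟩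
    have hw2 : (⟨w, hw⟩ : {d : D // π d = v}) ∈ Finset.univ \ A := by
      simp only [hA, Finset.mem_sdiff, Finset.mem_univ, true_and, Finset.mem_insert,
        Finset.mem_singleton, Subtype.mk.injEq]
      push_neg
      exact ⟨h7, h8, h9⟩
    rw [hx, Finset.mem_singleton] at hu2 hw2
    have := hu2.trans hw2.symm
    exact congrArg Subtype.val this
  -- a fpf involution of the darts at `v` is determined by its value at `a`
  have hdet : ∀ (g h : D → D), (∀ d, g (g d) = d) → (∀ d, g d ≠ d) →
      (∀ d, π (g d) = π d) → (∀ d, h (h d) = d) → (∀ d, h d ≠ d) →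
      (∀ d, π (h d) = π d) → g a = h a → ∀ s, π s = v → g s = h s := by
    intro g h ginv gfpf gπ hinv2 hfpf2 hπ2 hga s hs
    have hπb : π (g a) = v := by rw [gπ]; exact ha
    have hba : g a ≠ a := gfpf a
    by_cases hsa : s = a
    · rw [hsa]; exact hga
    by_cases hsb : s = g a
    · rw [hsb, ginv a, hga, hinv2 a]
    refine huniq (g a) s (g s) (h s) hπb hs (by rw [gπ]; exact hs)
      (by rw [hπ2]; exact hs) hba hsa hsb ?_ ?_ (gfpf s) ?_ ?_ (hfpf2 s)
    · intro h1; exact hsb ((ginv s).symm.trans (congrArg g h1))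
    · intro h1; exact hsa (((ginv s).symm.trans (congrArg g h1)).trans (ginv a))
    · intro h1; exact hsb ((((hinv2 s).symm).trans (congrArg h h1)).trans hga.symm)
    · intro h1
      exact hsa (((hinv2 s).symm).trans
        ((congrArg h (h1.trans hga)).trans (hinv2 a)))
  have hdetτ : ∀ i j : Fin 3, τ i a = τ j a → i = j := by
    intro i j hij
    by_contra hne
    apply hdist i j hne
    funext d
    by_cases hd : π d = v
    · exact hdet (τ i) (τ j) (hinv i) (hfpf i) (hvert i) (hinv j) (hfpf j)
        (hvert j) hij d hd
    · exact hagree i j d hd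
  have hτmem : ∀ i : Fin 3, τ i a = f a ∨ τ i a = c ∨ τ i a = f c := by
    intro i
    rcases hS (τ i a) (by rw [hvert]; exact ha) with h | h | h | h
    · exact absurd h (hfpf i a)
    · exact Or.inl h
    · exact Or.inr (Or.inl h)
    · exact Or.inr (Or.inr h)
  have hexi : ∃ i : Fin 3, τ i a = f a := by
    by_contra hcon
    push_neg at hcon
    have h3 : ∀ i : Fin 3, τ i a = c ∨ τ i a = f c := by
      intro i
      rcases hτmem i with h | h | h
      · exact absurd h (hcon i)
      · exact Or.inl h
      · exact Or.inr h
    have h4 : τ 0 a = τ 1 a ∨ τ 0 a = τ 2 a ∨ τ 1 a = τ 2 a := by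
      rcases h3 0 with h0 | h0 <;> rcases h3 1 with h1 | h1 <;>
        rcases h3 2 with h2 | h2 <;> rw [h0, h1, h2] <;> tauto
    rcases h4 with h | h | h
    · exact absurd (hdetτ 0 1 h) (by decide)
    · exact absurd (hdetτ 0 2 h) (by decide)
    · exact absurd (hdetτ 1 2 h) (by decide)
  obtain ⟨i₀, hi₀⟩ := hexi
  -- the transition agreeing with `f` at `a` agrees with `f` on all darts at `v`
  have hτf : ∀ i : Fin 3, τ i a = f a → ∀ s, π s = v → τ i s = f s := by
    intro i hia
    have hifa : τ i (f a) = a := by rw [← hia]; exact hinv i a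
    have hic : τ i c = f c := by
      refine huniq (f a) c (τ i c) (f c) hfa hc (by rw [hvert]; exact hc) hfc
        hfaa hca hcfa ?_ ?_ (hfpf i c) hfc_a hfc_fa hfcc
      · intro h1
        exact hcfa (((hinv i c).symm.trans (congrArg (τ i) h1)).trans hia)
      · intro h1
        exact hca ((hinv i c).symm.trans
          ((congrArg (τ i) (h1.trans hia.symm)).trans (hinv i a)))
    have hifc : τ i (f c) = c := by rw [← hic]; exact hinv i c
    intro s hs
    rcases hS s hs with rfl | rfl | rfl | rfl
    · exact hia
    · rw [hifa, hff a ha]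
    · exact hic
    · rw [hifc, hff c hc]
  -- the count for the transition agreeing with f
  have hKeq : ∀ i : Fin 3, τ i a = f a → circuitCount ε (τ i) = Nat.card (Quot R0) := by
    intro i hia
    have hto : ∀ x y, (ε x = y ∨ τ i x = y) → Quot.mk R0 x = Quot.mk R0 y := by
      intro x y h
      rcases h with h | h
      · exact Quot.sound (Or.inl h)
      · by_cases hx : π x = v
        · rw [← h, hτf i hia x hx]
          exact Quot.eqvGen_sound (hxf x hx)
        · exact Quot.sound (Or.inr ⟨hx, (hagree 0 i x hx).trans h⟩)
    unfold circuitCount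
    refine Nat.card_congr ⟨Quot.lift (Quot.mk R0) hto,
      Quot.lift (Quot.mk _) (fun x y h => Quot.sound (hRsub i x y h)), ?_, ?_⟩
    · intro q; induction q using Quot.ind; rfl
    · intro q; induction q using Quot.ind; rfl
  -- which class each dart at `v` belongs to
  have hside : ∀ s, π s = v →
      (Relation.EqvGen R0 s a ∨ Relation.EqvGen R0 s c) := by
    intro s hs
    rcases hS s hs with rfl | rfl | rfl | rfl
    · exact Or.inl (Relation.EqvGen.refl _)
    · exact Or.inl (Relation.EqvGen.symm _ _ (hxf a ha))
    · exact Or.inr (Relation.EqvGen.refl _)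
    · exact Or.inr (Relation.EqvGen.symm _ _ (hxf c hc))
  -- the count for the other two transitions
  have hKm : ∀ j : Fin 3, τ j a ≠ f a →
      circuitCount ε (τ j) = Nat.card (Quot R0) - 1 := by
    intro j hj
    have hjc : τ j a = c ∨ τ j a = f c := by
      rcases hτmem j with h | h | h
      · exact absurd h hj
      · exact Or.inl h
      · exact Or.inr h
    set rj : D → D → Prop := fun a b => ε a = b ∨ τ j a = b with hrj
    have haEc : Relation.EqvGen rj a c := by
      rcases hjc with h | h
      · exact Relation.EqvGen.rel _ _ (Or.inr h)
      · exact Relation.EqvGen.trans a (f c) c (Relation.EqvGen.rel a (f c) (Or.inr h))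
          (hEsub j (f c) c (Relation.EqvGen.symm c (f c) (hxf c hc)))
    have hac : ¬ Relation.EqvGen R0 a c := by
      intro h
      rcases htwo a c ha hc h with h1 | h1
      · exact hca h1
      · exact hcfa h1
    have hE' : ∀ x y, Relation.EqvGen rj x y → Relation.EqvGen R0 x y ∨
        ((Relation.EqvGen R0 x a ∨ Relation.EqvGen R0 x c) ∧
         (Relation.EqvGen R0 y a ∨ Relation.EqvGen R0 y c)) := by
      intro x y h
      induction h with
      | rel x y hxy =>
        rcases hxy with h | h
        · exact Or.inl (Relation.EqvGen.rel _ _ (Or.inl h))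
        · by_cases hx : π x = v
          · refine Or.inr ⟨hside x hx, hside y ?_⟩
            rw [← h, hvert]; exact hx
          · exact Or.inl (Relation.EqvGen.rel _ _
              (Or.inr ⟨hx, (hagree 0 j x hx).trans h⟩))
      | refl x => exact Or.inl (Relation.EqvGen.refl x)
      | symm x y _ ih =>
        rcases ih with h | ⟨h1, h2⟩
        · exact Or.inl (Relation.EqvGen.symm _ _ h)
        · exact Or.inr ⟨h2, h1⟩
      | trans x y z _ _ ih1 ih2 =>
        rcases ih1 with h1 | ⟨ha1, hb1⟩
        · rcases ih2 with h2 | ⟨ha2, hb2⟩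
          · exact Or.inl (h1.trans _ _ _ h2)
          · refine Or.inr ⟨?_, hb2⟩
            rcases ha2 with h3 | h3
            · exact Or.inl (h1.trans _ _ _ h3)
            · exact Or.inr (h1.trans _ _ _ h3)
        · rcases ih2 with h2 | ⟨ha2, hb2⟩
          · refine Or.inr ⟨ha1, ?_⟩
            rcases hb1 with h3 | h3
            · exact Or.inl ((Relation.EqvGen.symm _ _ h2).trans _ _ _ h3)
            · exact Or.inr ((Relation.EqvGen.symm _ _ h2).trans _ _ _ h3)
          · exact Or.inr ⟨ha1, hb2⟩
    set φ : Quot R0 → Quot rj :=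
      Quot.lift (Quot.mk rj) (fun x y h => Quot.sound (hRsub j x y h)) with hφ
    have hbij : Function.Bijective
        (fun q : {q : Quot R0 // q ≠ Quot.mk R0 c} => φ q.1) := by
      constructor
      · rintro ⟨q1, h1⟩ ⟨q2, h2⟩ heq
        obtain ⟨d1, rfl⟩ := Quot.exists_rep q1
        obtain ⟨d2, rfl⟩ := Quot.exists_rep q2
        have h3 : Relation.EqvGen rj d1 d2 := Quot.eqvGen_exact heq
        apply Subtype.ext
        show Quot.mk R0 d1 = Quot.mk R0 d2
        rcases hE' d1 d2 h3 with h4 | ⟨h4, h5⟩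
        · exact Quot.eqvGen_sound h4
        · have hd1 : Quot.mk R0 d1 = Quot.mk R0 a := by
            rcases h4 with h | h
            · exact Quot.eqvGen_sound h
            · exact absurd (Quot.eqvGen_sound h) h1
          have hd2 : Quot.mk R0 d2 = Quot.mk R0 a := by
            rcases h5 with h | h
            · exact Quot.eqvGen_sound h
            · exact absurd (Quot.eqvGen_sound h) h2
          rw [hd1, hd2]
      · intro q
        obtain ⟨d, rfl⟩ := Quot.exists_rep q
        by_cases hd : Quot.mk R0 d = Quot.mk R0 c
        · refine ⟨⟨Quot.mk R0 a, fun h => hac (Quot.eqvGen_exact h)⟩, ?_⟩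
          show Quot.mk rj a = Quot.mk rj d
          have h1 : Relation.EqvGen rj c d :=
            hEsub j _ _ (Relation.EqvGen.symm _ _ (Quot.eqvGen_exact hd))
          exact Quot.eqvGen_sound (haEc.trans _ _ _ h1)
        · exact ⟨⟨Quot.mk R0 d, hd⟩, rfl⟩
    have h6 : Nat.card {q : Quot R0 // q ≠ Quot.mk R0 c} = Nat.card (Quot rj) :=
      Nat.card_congr (Equiv.ofBijective _ hbij)
    have h7 : Nat.card {q : Quot R0 // q ≠ Quot.mk R0 c} =
        Nat.card (Quot R0) - 1 := by
      haveI : Fintype (Quot R0) := Fintype.ofFinite _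
      simp only [Nat.card_eq_fintype_card]
      rw [show (Fintype.card {q : Quot R0 // q ≠ Quot.mk R0 c}) =
        (Fintype.card {q : Quot R0 // ¬ q = Quot.mk R0 c}) from rfl]
      rw [Fintype.card_subtype_compl, Fintype.card_subtype_eq]
    show Nat.card (Quot rj) = _
    rw [← h6, h7]
  -- conclusion
  haveI : Nonempty (Quot R0) := ⟨Quot.mk _ a⟩
  have hKpos : 0 < Nat.card (Quot R0) := Nat.card_pos
  set K := Nat.card (Quot R0) with hKdef
  have hne : ∀ j : Fin 3, j ≠ i₀ → τ j a ≠ f a :=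
    fun j hj h => hj (hdetτ j i₀ (h.trans hi₀.symm))
  refine ⟨K - 1, ?_⟩
  have h012 : i₀ = 0 ∨ i₀ = 1 ∨ i₀ = 2 := by fin_cases i₀ <;> simp
  have hK1 : K - 1 + 1 = K := by omega
  rcases h012 with rfl | rfl | rfl
  · rw [hKeq 0 hi₀, hKm 1 (hne 1 (by decide)), hKm 2 (hne 2 (by decide)), hK1]
    exact (Multiset.cons_swap _ _ _).trans
      (congrArg (fun m => (K - 1) ::ₘ m) (Multiset.cons_swap _ _ _))
  · rw [hKeq 1 hi₀, hKm 0 (hne 0 (by decide)), hKm 2 (hne 2 (by decide)), hK1]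
    exact congrArg (fun m => (K - 1) ::ₘ m) (Multiset.cons_swap _ _ _)
  · rw [hKeq 2 hi₀, hKm 0 (hne 0 (by decide)), hKm 1 (hne 1 (by decide)), hK1]
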